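/- arXiv:math/0501206 — 2 statements merged into one kernel-verified Lean document; each statement's English description precedes it below -/
import Mathlib

section
/- Let n be a positive integer. Define the binary operation A ∘ B = AB − BA + (tr B)·A − (tr A)·B on n×n complex matrices. For n×n complex matrices A, B, C, D, set S = (tr A)·(CB − BC) + (tr B)·(AC − CA) + (tr C)·(BA − AB). Then ((A∘B)∘C + (C∘A)∘B + (B∘C)∘A) ∘ D = SD − DS + (tr D)·S. -/
open Matrix

/-- The deformed commutator `A ∘ B = AB − BA + (tr B)·A − (tr A)·B`. -/
noncomputable def circ {n : ℕ} (A B : Matrix (Fin n) (Fin n) ℂ) : Matrix (Fin n) (Fin n) ℂ :=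
  A * B - B * A + B.trace • A - A.trace • B

lemma circ_key {n : ℕ} (A B C : Matrix (Fin n) (Fin n) ℂ) :
    circ (circ A B) C + circ (circ C A) B + circ (circ B C) A =
    A.trace • (C * B - B * C) + B.trace • (A * C - C * A) + C.trace • (B * A - A * B) := by
  simp only [circ, trace_add, trace_sub, trace_smul, trace_mul_comm B A, trace_mul_comm C A,
    trace_mul_comm C B, smul_eq_mul, sub_mul, mul_sub, add_mul, mul_add, smul_mul_assoc,
    mul_smul_comm, smul_sub, smul_add, smul_smul, mul_assoc]
  module

theorem stmt_4 (n : ℕ) (hn : 0 < n) (A B C D : Matrix (Fin n) (Fin n) ℂ)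
    (S : Matrix (Fin n) (Fin n) ℂ)
    (hS : S = A.trace • (C * B - B * C) + B.trace • (A * C - C * A) +
      C.trace • (B * A - A * B)) :
    circ (circ (circ A B) C + circ (circ C A) B + circ (circ B C) A) D =
      S * D - D * S + D.trace • S := by
  rw [circ_key, ← hS, circ]
  have htr : S.trace = 0 := by
    simp [hS, trace_smul, trace_sub, trace_mul_comm B A, trace_mul_comm C A, trace_mul_comm C B]
  rw [htr, zero_smul, sub_zero]
end

section
/- Let n be a positive integer. Define the binary operation A ∘ B = AB − BA + (tr B)·A − (tr A)·B on n×n complex matrices. Then for all n×n complex matrices A, B, C, D one has ((A∘B)∘C + (C∘A)∘B + (B∘C)∘A) ∘ D + ((C∘B)∘D + (D∘C)∘B + (B∘D)∘C) ∘ A + ((C∘D)∘A + (A∘C)∘D + (D∘A)∘C) ∘ B + ((B∘A)∘D + (D∘B)∘A + (A∘D)∘B) ∘ C = 0. -/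
open Matrix

lemma trace_circ {n : ℕ} (A B : Matrix (Fin n) (Fin n) ℂ) : (circ A B).trace = 0 := by
  simp [circ, trace_mul_comm A B, mul_comm]

lemma circ_eq {n : ℕ} (A B : Matrix (Fin n) (Fin n) ℂ) (h : A.trace = 0) :
    circ A B = A * B - B * A + B.trace • A := by
  simp [circ, h]

theorem stmt_5 (n : ℕ) (hn : 0 < n) (A B C D : Matrix (Fin n) (Fin n) ℂ) :
    circ (circ (circ A B) C + circ (circ C A) B + circ (circ B C) A) D +
    circ (circ (circ C B) D + circ (circ D C) B + circ (circ B D) C) A +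
    circ (circ (circ C D) A + circ (circ A C) D + circ (circ D A) C) B +
    circ (circ (circ B A) D + circ (circ D B) A + circ (circ A D) B) C = 0 := by
  have h : ∀ X Y Z W : Matrix (Fin n) (Fin n) ℂ,
      (circ (circ X Y) Z + circ (circ Z X) Y + circ (circ Y Z) X).trace = 0 := by
    intro X Y Z W; simp [trace_circ]
  rw [circ_eq _ _ (h A B C D), circ_eq _ _ (h C B D A), circ_eq _ _ (h C D A B),
    circ_eq _ _ (h B A D C)]
  rw [circ_eq _ _ (trace_circ A B), circ_eq _ _ (trace_circ C A), circ_eq _ _ (trace_circ B C),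
    circ_eq _ _ (trace_circ C B), circ_eq _ _ (trace_circ D C), circ_eq _ _ (trace_circ B D),
    circ_eq _ _ (trace_circ C D), circ_eq _ _ (trace_circ A C), circ_eq _ _ (trace_circ D A),
    circ_eq _ _ (trace_circ B A), circ_eq _ _ (trace_circ D B), circ_eq _ _ (trace_circ A D)]
  simp only [circ, mul_assoc, mul_add, add_mul, mul_sub, sub_mul, smul_mul_assoc,
    mul_smul_comm, smul_smul, smul_add, smul_sub]
  module
end
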